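/- The families r(A) = z_{A,∅} and u(A) = z_{∅,A}, for A ranging over nonempty subsets of {1,...,n}, are related by Möbius inversion: u(B) = ∑_{D⊆B} (-1)^{|B|-|D|} r(D) and r(A) = ∑_{C⊆A} u(C), and each family forms a basis for the span T_n of the generators z_{A,i} of Q_n. -/

import Mathlib

namespace QnPaper

/-- The defining relations of the quadratic algebra `Q_n`:
for `A ⊆ {1,…,n}` and distinct `i, j ∉ A`,
`z_{A∪{i},j} + z_{A,i} = z_{A∪{j},i} + z_{A,j}` and
`z_{A∪{i},j} * z_{A,i} = z_{A∪{j},i} * z_{A,j}`. -/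
inductive QRel (k : Type) [Field k] (n : ℕ) :
    FreeAlgebra k (Finset (Fin n) × Fin n) → FreeAlgebra k (Finset (Fin n) × Fin n) → Prop
  | add_rel (A : Finset (Fin n)) (i j : Fin n) (hi : i ∉ A) (hj : j ∉ A) (hij : i ≠ j) :
      QRel k n (FreeAlgebra.ι k (insert i A, j) + FreeAlgebra.ι k (A, i))
        (FreeAlgebra.ι k (insert j A, i) + FreeAlgebra.ι k (A, j))
  | mul_rel (A : Finset (Fin n)) (i j : Fin n) (hi : i ∉ A) (hj : j ∉ A) (hij : i ≠ j) :
      QRel k n (FreeAlgebra.ι k (insert i A, j) * FreeAlgebra.ι k (A, i))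
        (FreeAlgebra.ι k (insert j A, i) * FreeAlgebra.ι k (A, j))

/-- The quadratic algebra `Q_n`. -/
abbrev Q (k : Type) [Field k] (n : ℕ) := RingQuot (QRel k n)

/-- The generator `z_{A,i}` of `Q_n` (only meaningful when `i ∉ A`). -/
def z (k : Type) [Field k] (n : ℕ) (A : Finset (Fin n)) (i : Fin n) : Q k n :=
  RingQuot.mkAlgHom k (QRel k n) (FreeAlgebra.ι k (A, i))

/-- `rAux s [i₁,…,i_r] = z_{s,i₁} + z_{s∪{i₁},i₂} + ⋯`. -/
def rAux (k : Type) [Field k] (n : ℕ) (s : Finset (Fin n)) : List (Fin n) → Q k n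
  | [] => 0
  | a :: l => z k n s a + rAux k n (insert a s) l

/-- `r(A) = z_{A,∅}`, computed using the increasing ordering of `A`. -/
def rFin (k : Type) [Field k] (n : ℕ) (A : Finset (Fin n)) : Q k n :=
  rAux k n ∅ (A.sort (· ≤ ·))

/-- `u(B) = z_{∅,B} = ∑_{D ⊆ B} (-1)^{|B|-|D|} r(D)`. -/
def uFin (k : Type) [Field k] (n : ℕ) (B : Finset (Fin n)) : Q k n :=
  ∑ D ∈ B.powerset, (-1 : Q k n) ^ (B.card - D.card) * rFin k n D
/-- The span `T_n` of all generators `z_{A,i}` (`i ∉ A`). -/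
def Tn (k : Type) [Field k] (n : ℕ) : Submodule k (Q k n) :=
  Submodule.span k {x | ∃ (A : Finset (Fin n)) (i : Fin n), i ∉ A ∧ x = z k n A i}

section Aux

variable (k : Type) [Field k] (n : ℕ)

/-- Möbius inversion over the boolean lattice. -/
lemma mobius {S : Type*} [Ring S] (A : Finset (Fin n)) :
    ∀ f : Finset (Fin n) → S,
      ∑ C ∈ A.powerset, ∑ D ∈ C.powerset, (-1 : S) ^ (C.card - D.card) * f D = f A := by
  classical
  induction A using Finset.induction_on with
  | empty => intro f; simp
  | @insert a A ha ih =>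
    intro f
    rw [Finset.sum_powerset_insert ha, ih f]
    have key : ∀ C ∈ A.powerset,
        ∑ D ∈ (insert a C).powerset, (-1 : S) ^ ((insert a C).card - D.card) * f D
          = -(∑ D ∈ C.powerset, (-1 : S) ^ (C.card - D.card) * f D)
            + ∑ D ∈ C.powerset, (-1 : S) ^ (C.card - D.card) * f (insert a D) := by
      intro C hC
      have haC : a ∉ C := fun h => ha ((Finset.mem_powerset.mp hC) h)
      rw [Finset.sum_powerset_insert haC, Finset.card_insert_of_notMem haC,
        ← Finset.sum_neg_distrib]
      congr 1
      · refine Finset.sum_congr rfl fun D hD => ?_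
        have hle : D.card ≤ C.card :=
          Finset.card_le_card (Finset.mem_powerset.mp hD)
        rw [Nat.succ_sub hle, pow_succ, mul_neg_one, neg_mul]
      · refine Finset.sum_congr rfl fun D hD => ?_
        have haD : a ∉ D := fun h => haC ((Finset.mem_powerset.mp hD) h)
        rw [Finset.card_insert_of_notMem haD, Nat.succ_sub_succ]
    rw [Finset.sum_congr rfl key, Finset.sum_add_distrib, Finset.sum_neg_distrib,
      ih f, ih (fun D => f (insert a D))]
    abel

lemma z_add_swap (s : Finset (Fin n)) (a b : Fin n) (ha : a ∉ s) (hb : b ∉ s)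
    (hab : a ≠ b) :
    z k n (insert a s) b + z k n s a = z k n (insert b s) a + z k n s b := by
  have h := RingQuot.mkAlgHom_rel k (QRel.add_rel (k := k) (n := n) s a b ha hb hab)
  simpa only [z, map_add] using h

lemma rAux_perm {l l' : List (Fin n)} (h : l.Perm l') :
    ∀ s : Finset (Fin n), l.Nodup → (∀ x ∈ l, x ∉ s) →
      rAux k n s l = rAux k n s l' := by
  induction h with
  | nil => intro s _ _; rfl
  | @cons x l₁ l₂ p ih =>
    intro s hn hd
    simp only [rAux]
    rw [ih (insert x s) (List.nodup_cons.mp hn).2]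
    intro y hy
    simp only [Finset.mem_insert, not_or]
    exact ⟨fun hxy => (List.nodup_cons.mp hn).1 (hxy ▸ hy),
      hd y (List.mem_cons_of_mem _ hy)⟩
  | @swap x y l =>
    intro s hn hd
    have hyx : y ≠ x := by
      intro hxy; exact (List.nodup_cons.mp hn).1 (hxy ▸ List.mem_cons_self)
    have hys : y ∉ s := hd y (List.mem_cons_self)
    have hxs : x ∉ s := hd x (List.mem_cons_of_mem _ (List.mem_cons_self))
    simp only [rAux, ← add_assoc]
    rw [add_comm (z k n s y) (z k n (insert y s) x),
      z_add_swap k n s y x hys hxs hyx,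
      add_comm (z k n (insert x s) y) (z k n s x), Finset.insert_comm]
  | @trans l₁ l₂ l₃ p₁ p₂ ih₁ ih₂ =>
    intro s hn hd
    rw [ih₁ s hn hd, ih₂ s (p₁.nodup_iff.mp hn) fun x hx => hd x (p₁.mem_iff.mpr hx)]

lemma rAux_append_single (l : List (Fin n)) :
    ∀ (s : Finset (Fin n)) (i : Fin n),
      rAux k n s (l ++ [i])
        = rAux k n s l + z k n (l.foldl (fun t a => insert a t) s) i := by
  induction l with
  | nil => intro s i; simp [rAux]
  | cons a l ih =>
    intro s i
    simp only [List.cons_append, rAux, List.foldl_cons, List.append_eq, add_assoc]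
    rw [ih (insert a s) i]

lemma foldl_insert (l : List (Fin n)) :
    ∀ s : Finset (Fin n), l.foldl (fun t a => insert a t) s = s ∪ l.toFinset := by
  induction l with
  | nil => intro s; simp
  | cons a l ih =>
    intro s
    simp only [List.foldl_cons, List.toFinset_cons, ih (insert a s)]
    rw [Finset.insert_union, Finset.union_insert]

lemma rFin_empty : rFin k n ∅ = 0 := by
  simp [rFin, rAux]

lemma rFin_insert (A : Finset (Fin n)) (i : Fin n) (hi : i ∉ A) :
    rFin k n (insert i A) = rFin k n A + z k n A i := by
  classical
  have hperm : ((insert i A).sort (· ≤ ·)).Perm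
      (A.sort (· ≤ ·) ++ [i]) := by
    apply List.perm_of_nodup_nodup_toFinset_eq (Finset.sort_nodup _ _)
    · rw [List.nodup_append]
      refine ⟨Finset.sort_nodup _ _, List.nodup_singleton _, ?_⟩
      intro x hx y hx' hxy
      subst hxy
      rw [List.mem_singleton] at hx'
      exact hi (hx' ▸ (Finset.mem_sort _).mp hx)
    · rw [List.toFinset_append, Finset.sort_toFinset, Finset.sort_toFinset]
      ext x; simp [or_comm]
  rw [rFin, rAux_perm k n hperm ∅ (Finset.sort_nodup _ _) (by simp),
    rAux_append_single, foldl_insert, Finset.sort_toFinset, Finset.empty_union]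
  rfl

/-- The square-zero extension representation of `Q_n`. -/
noncomputable def phi : Q k n →ₐ[k] TrivSqZeroExt k (Finset (Fin n) → k) :=
  RingQuot.liftAlgHom k
    ⟨FreeAlgebra.lift k
        (fun p : Finset (Fin n) × Fin n =>
          TrivSqZeroExt.inr (Pi.single (insert p.2 p.1) (1 : k) - Pi.single p.1 1)),
      by
        rintro x y (⟨A, i, j, hi, hj, hij⟩ | ⟨A, i, j, hi, hj, hij⟩)
        · simp only [map_add, FreeAlgebra.lift_ι_apply, ← TrivSqZeroExt.inr_add,
            sub_add_sub_cancel]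
          rw [Finset.insert_comm]
        · simp only [map_mul, FreeAlgebra.lift_ι_apply, TrivSqZeroExt.inr_mul_inr]⟩

lemma phi_z (A : Finset (Fin n)) (i : Fin n) :
    phi k n (z k n A i)
      = TrivSqZeroExt.inr (Pi.single (insert i A) (1 : k) - Pi.single A 1) := by
  rw [z, phi, RingQuot.liftAlgHom_mkAlgHom_apply, FreeAlgebra.lift_ι_apply]

lemma phi_rAux (l : List (Fin n)) :
    ∀ s : Finset (Fin n),
      phi k n (rAux k n s l)
        = TrivSqZeroExt.inr
            (Pi.single (l.foldl (fun t a => insert a t) s) (1 : k) - Pi.single s 1) := by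
  induction l with
  | nil => intro s; simp [rAux]
  | cons a l ih =>
    intro s
    simp only [rAux, map_add, phi_z, ih (insert a s), List.foldl_cons,
      ← TrivSqZeroExt.inr_add]
    rw [add_comm, sub_add_sub_cancel]

lemma phi_rFin (A : Finset (Fin n)) :
    phi k n (rFin k n A)
      = TrivSqZeroExt.inr (Pi.single A (1 : k) - Pi.single ∅ 1) := by
  rw [rFin, phi_rAux, foldl_insert, Finset.sort_toFinset, Finset.empty_union]

lemma w_indep :
    LinearIndependent k
      (fun A : {A : Finset (Fin n) // A.Nonempty} =>
        (Pi.single A.1 (1 : k) - Pi.single ∅ 1 : Finset (Fin n) → k)) := by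
  classical
  rw [Fintype.linearIndependent_iff]
  intro g hg B
  have h := congrFun hg B.1
  have hB : (B.1 : Finset (Fin n)) ≠ ∅ := Finset.nonempty_iff_ne_empty.mp B.2
  simp only [Finset.sum_apply, Pi.smul_apply, Pi.sub_apply, Pi.single_apply,
    if_neg hB, sub_zero, smul_eq_mul, mul_ite, mul_one, mul_zero, Pi.zero_apply,
    ← Subtype.ext_iff, Finset.sum_ite_eq, Finset.mem_univ, if_true] at h
  exact h

lemma rFin_indep :
    LinearIndependent k
      (fun A : {A : Finset (Fin n) // A.Nonempty} => rFin k n A.1) := by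
  have h2 : LinearIndependent k
      (fun A : {A : Finset (Fin n) // A.Nonempty} =>
        (TrivSqZeroExt.inr (Pi.single A.1 (1 : k) - Pi.single ∅ 1) :
          TrivSqZeroExt k (Finset (Fin n) → k))) := by
    refine (w_indep k n).map' (TrivSqZeroExt.inrHom k _) ?_
    exact LinearMap.ker_eq_bot.mpr TrivSqZeroExt.inr_injective
  refine LinearIndependent.of_comp (phi k n).toLinearMap ?_
  convert h2 using 1
  funext A
  simp [phi_rFin]
  all_goals rfl

lemma rFin_mem_Tn (A : Finset (Fin n)) : rFin k n A ∈ Tn k n := by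
  classical
  have main : ∀ (l : List (Fin n)) (s : Finset (Fin n)),
      (∀ x ∈ l, x ∉ s) → l.Nodup → rAux k n s l ∈ Tn k n := by
    intro l
    induction l with
    | nil => intro s _ _; exact zero_mem _
    | cons a l ih =>
      intro s hd hn
      refine add_mem (Submodule.subset_span ?_) (ih (insert a s) ?_
        (List.nodup_cons.mp hn).2)
      · exact ⟨s, a, hd a (List.mem_cons_self), rfl⟩
      · intro y hy
        simp only [Finset.mem_insert, not_or]
        exact ⟨fun hxy => (List.nodup_cons.mp hn).1 (hxy ▸ hy),
          hd y (List.mem_cons_of_mem _ hy)⟩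
  exact main _ _ (by simp) (Finset.sort_nodup _ _)

lemma span_rFin :
    Submodule.span k
      (Set.range fun A : {A : Finset (Fin n) // A.Nonempty} => rFin k n A.1)
      = Tn k n := by
  classical
  apply le_antisymm
  · rw [Submodule.span_le]
    rintro x ⟨A, rfl⟩
    exact rFin_mem_Tn k n A.1
  · rw [Tn, Submodule.span_le]
    rintro x ⟨A, i, hi, rfl⟩
    have hz : z k n A i = rFin k n (insert i A) - rFin k n A := by
      rw [rFin_insert k n A i hi, add_sub_cancel_left]
    rw [hz]
    refine sub_mem (Submodule.subset_span ⟨⟨insert i A, Finset.insert_nonempty _ _⟩, rfl⟩) ?_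
    by_cases hA : A.Nonempty
    · exact Submodule.subset_span ⟨⟨A, hA⟩, rfl⟩
    · rw [Finset.not_nonempty_iff_eq_empty] at hA
      rw [hA, rFin_empty]
      exact zero_mem _

lemma uFin_empty : uFin k n ∅ = 0 := by
  simp [uFin, rFin_empty]

lemma rFin_eq_sum_uFin (A : Finset (Fin n)) :
    rFin k n A = ∑ C ∈ A.powerset, uFin k n C := by
  simp only [uFin]
  exact (mobius n A (rFin k n)).symm

lemma neg_one_pow_mul_mem (m : ℕ) {x : Q k n} (hx : x ∈ Tn k n) :
    (-1 : Q k n) ^ m * x ∈ Tn k n := by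
  have : (-1 : Q k n) ^ m * x = ((-1 : k) ^ m) • x := by
    rw [Algebra.smul_def, map_pow, map_neg, map_one]
  rw [this]
  exact Submodule.smul_mem _ _ hx

lemma span_uFin :
    Submodule.span k
      (Set.range fun A : {A : Finset (Fin n) // A.Nonempty} => uFin k n A.1)
      = Tn k n := by
  classical
  apply le_antisymm
  · rw [Submodule.span_le]
    rintro x ⟨B, rfl⟩
    simp only [uFin]
    exact sum_mem fun D _ => neg_one_pow_mul_mem k n _ (rFin_mem_Tn k n D)
  · rw [← span_rFin k n, Submodule.span_le]
    rintro x ⟨A, rfl⟩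
    simp only [rFin_eq_sum_uFin k n]
    refine sum_mem fun C _ => ?_
    by_cases hC : C.Nonempty
    · exact Submodule.subset_span ⟨⟨C, hC⟩, rfl⟩
    · rw [Finset.not_nonempty_iff_eq_empty] at hC
      rw [hC, uFin_empty]
      exact zero_mem _

lemma uFin_indep :
    LinearIndependent k
      (fun A : {A : Finset (Fin n) // A.Nonempty} => uFin k n A.1) := by
  have h1 := linearIndependent_iff_card_eq_finrank_span.mp (rFin_indep k n)
  rw [linearIndependent_iff_card_eq_finrank_span, h1]
  unfold Set.finrank
  rw [span_rFin, span_uFin]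

end Aux

/-- The families `r(A)` and `u(A)`, for nonempty `A`, are related by Möbius inversion
and each forms a basis of `T_n`. -/
theorem stmt8 (k : Type) [Field k] (n : ℕ) :
    (∀ B : Finset (Fin n),
      uFin k n B = ∑ D ∈ B.powerset, (-1 : Q k n) ^ (B.card - D.card) * rFin k n D) ∧
    (∀ A : Finset (Fin n), rFin k n A = ∑ C ∈ A.powerset, uFin k n C) ∧
    LinearIndependent k (fun A : {A : Finset (Fin n) // A.Nonempty} => rFin k n A.1) ∧
    Submodule.span k
      (Set.range fun A : {A : Finset (Fin n) // A.Nonempty} => rFin k n A.1) = Tn k n ∧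
    LinearIndependent k (fun A : {A : Finset (Fin n) // A.Nonempty} => uFin k n A.1) ∧
    Submodule.span k
      (Set.range fun A : {A : Finset (Fin n) // A.Nonempty} => uFin k n A.1) = Tn k n := by
  exact ⟨fun B => rfl, rFin_eq_sum_uFin k n, rFin_indep k n, span_rFin k n,
    uFin_indep k n, span_uFin k n⟩
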